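/- Suppose a mixed strategy profile x and reals ū^i, u^i_s, r^i_s, g^i_s, b^i_s ∈ {0,1} (for all players i and s ∈ S_i) satisfy the MIMLP3 constraints — u^i_s = u_i(s, x), ū^i ≥ u^i_s, r^i_s = ū^i − u^i_s, r^i_s ≥ 0, r^i_s ≤ U^i b^i_s, g^i_s ≥ x^i(s), g^i_s ≥ 1 − b^i_s. Then the objective value ∑_{i=1}^n ∑_{s∈S_i} (g^i_s − (1 − b^i_s)) is ≥ 0, and if it equals 0 then x is a Nash equilibrium. -/
import Mathlib


open Finset

/-- Expected payoff `U_i(x)` of player `i` under the mixed strategy profile `x`. -/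
def expPayoff {n : ℕ} {S : Fin n → Type} [∀ i, Fintype (S i)]
    (A : Fin n → (∀ j, S j) → ℝ) (x : ∀ i, S i → ℝ) (i : Fin n) : ℝ :=
  ∑ t : ∀ j, S j, A i t * ∏ j, x j (t j)

/-- Expected payoff `u_i(s, x)` of player `i` playing the pure strategy `s` while the
other players play their mixed strategies from `x`: summing over full pure profiles `t`
with `t i = s` is the same as summing over tuples `ŝ` of pure strategies of the others. -/
def purePayoff {n : ℕ} {S : Fin n → Type} [∀ i, Fintype (S i)] [∀ i, DecidableEq (S i)]
    (A : Fin n → (∀ j, S j) → ℝ) (x : ∀ i, S i → ℝ) (i : Fin n) (s : S i) : ℝ :=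
  ∑ t : ∀ j, S j, if t i = s then A i t * ∏ j ∈ Finset.univ.erase i, x j (t j) else 0

/-- `U^i`: the maximum difference of any two payoffs of player `i`. -/
noncomputable def payoffRange {n : ℕ} {S : Fin n → Type} [∀ i, Fintype (S i)]
    [∀ i, Nonempty (S i)] (A : Fin n → (∀ j, S j) → ℝ) (i : Fin n) : ℝ :=
  Finset.univ.sup' Finset.univ_nonempty (A i) - Finset.univ.inf' Finset.univ_nonempty (A i)


lemma exp_update {n : ℕ} {S : Fin n → Type} [∀ i, Fintype (S i)] [∀ i, DecidableEq (S i)]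
    (A : Fin n → (∀ j, S j) → ℝ) (x : ∀ i, S i → ℝ) (i : Fin n) (y : S i → ℝ) :
    expPayoff A (Function.update x i y) i = ∑ s, y s * purePayoff A x i s := by
  unfold expPayoff purePayoff
  simp only [Finset.mul_sum]
  rw [Finset.sum_comm]
  refine Finset.sum_congr rfl fun t _ => ?_
  rw [Finset.sum_congr rfl (g := fun s => if t i = s then y s * (A i t * ∏ j ∈ Finset.univ.erase i, x j (t j)) else 0) (fun s _ => by rw [mul_ite, mul_zero]),
    Finset.sum_ite_eq]
  simp only [Finset.mem_univ, if_true]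
  rw [← Finset.mul_prod_erase Finset.univ _ (Finset.mem_univ i)]
  have h1 : Function.update x i y i (t i) = y (t i) := by simp
  have h2 : ∀ j ∈ Finset.univ.erase i, Function.update x i y j (t j) = x j (t j) := by
    intro j hj
    rw [Function.update_of_ne (Finset.ne_of_mem_erase hj)]
  rw [h1, Finset.prod_congr rfl h2]
  ring

/-- If the mixed strategy profile `x` together with `ū^i`, `u^i_s`,
`r^i_s`, `g^i_s` and binary `b^i_s` satisfies the MIMLP3 constraints, then the objective
value `∑ᵢ ∑_{s ∈ S_i} (g^i_s − (1 − b^i_s))` is `≥ 0`, and if it equals `0` then `x` is a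
Nash equilibrium. -/
theorem mimlp3_objective_nonneg_and_optimal_gives_nash
    (n : ℕ) (hn : 2 ≤ n) (S : Fin n → Type)
    [∀ i, Fintype (S i)] [∀ i, Nonempty (S i)] [∀ i, DecidableEq (S i)]
    (A : Fin n → (∀ j, S j) → ℝ)
    (x : ∀ i, S i → ℝ)
    (hx0 : ∀ i s, 0 ≤ x i s) (hx1 : ∀ i, ∑ s, x i s = 1)
    (ubar : Fin n → ℝ) (u r g b : ∀ i, S i → ℝ)
    (hfeas : ∀ (i : Fin n) (s : S i),
        (b i s = 0 ∨ b i s = 1) ∧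
        u i s = purePayoff A x i s ∧
        u i s ≤ ubar i ∧
        r i s = ubar i - u i s ∧
        0 ≤ r i s ∧
        r i s ≤ payoffRange A i * b i s ∧
        x i s ≤ g i s ∧
        1 - b i s ≤ g i s) :
    0 ≤ ∑ i, ∑ s, (g i s - (1 - b i s)) ∧
    (∑ i, ∑ s, (g i s - (1 - b i s)) = 0 →
      ∀ (i : Fin n) (y : S i → ℝ), (∀ s, 0 ≤ y s) → ∑ s, y s = 1 →
      expPayoff A (Function.update x i y) i ≤ expPayoff A x i) := by
  have hterm : ∀ (i : Fin n) (s : S i), 0 ≤ g i s - (1 - b i s) := by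
    intro i s
    obtain ⟨hb, _, _, _, _, _, hxg, hbg⟩ := hfeas i s
    rcases hb with hb | hb
    · linarith
    · have := hx0 i s; rw [hb]; linarith
  have h1 : 0 ≤ ∑ i, ∑ s, (g i s - (1 - b i s)) :=
    Finset.sum_nonneg fun i _ => Finset.sum_nonneg fun s _ => hterm i s
  refine ⟨h1, fun hzero i y hy0 hy1 => ?_⟩
  -- each term is zero
  have hzero' : ∀ (i : Fin n) (s : S i), g i s - (1 - b i s) = 0 := by
    intro i s
    have hi := (Finset.sum_eq_zero_iff_of_nonneg
      (fun i _ => Finset.sum_nonneg fun s _ => hterm i s)).mp hzero i (Finset.mem_univ i)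
    exact (Finset.sum_eq_zero_iff_of_nonneg (fun s _ => hterm i s)).mp hi s (Finset.mem_univ s)
  -- complementarity: for each s, either u i s = ubar i or x i s = 0
  have hcomp : ∀ s : S i, x i s * purePayoff A x i s = x i s * ubar i := by
    intro s
    obtain ⟨hb, hu, hle, hr, hr0, hrle, hxg, hbg⟩ := hfeas i s
    rcases hb with hb | hb
    · have : r i s = 0 := by
        rw [hb, mul_zero] at hrle; linarith
      have : u i s = ubar i := by linarith [hr ▸ this]
      rw [← hu, this]
    · have hg0 : g i s = 0 := by have := hzero' i s; linarith
      have hx : x i s = 0 := le_antisymm (hg0 ▸ hxg) (hx0 i s)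
      rw [hx, zero_mul, zero_mul]
  have hx_eq : expPayoff A x i = ubar i := by
    have := exp_update A x i (x i)
    rw [Function.update_eq_self] at this
    rw [this, Finset.sum_congr rfl fun s _ => hcomp s, ← Finset.sum_mul, hx1 i, one_mul]
  rw [exp_update, hx_eq]
  calc ∑ s, y s * purePayoff A x i s ≤ ∑ s, y s * ubar i := by
        refine Finset.sum_le_sum fun s _ => ?_
        obtain ⟨_, hu, hle, _⟩ := hfeas i s
        exact mul_le_mul_of_nonneg_left (hu ▸ hle) (hy0 s)
    _ = ubar i := by rw [← Finset.sum_mul, hy1, one_mul]
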